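/- arXiv:2308.12254 — 2 statements merged into one kernel-verified Lean document; each statement's English description precedes it below -/
import Mathlib

section
/- Suppose that series s_{ij}(u) = δ_{ij} + Σ_{r≥1} s_{ij}^{(r)} u^{-r} (1 ≤ i,j ≤ N) with coefficients in a unital associative ℂ-algebra satisfy the quaternary relation. Then the single relation s_{11}(u) = s_{11}(−u) is equivalent to the full family of symmetry relations s_{ji}(−u) = s_{ij}(u) + (s_{ij}(u) − s_{ij}(−u))/(2u) for all 1 ≤ i,j ≤ N. -/
noncomputable section

namespace TY

variable {A : Type*} [Ring A] [Algebra ℂ A]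

/-- For `f(u) = Σ_{r≥0} a_r u^{-r}` (recorded as the power series `Σ a_r x^r` in
`x = u⁻¹`), this is the series `f(-u)`. -/
def negVar (f : PowerSeries A) : PowerSeries A :=
  PowerSeries.mk fun n => ((-1 : ℂ) ^ n) • PowerSeries.coeff n f

/-- For `f(u) = Σ_{r≥0} a_r u^{-r}`, this is the series `f(u + c)`, expanded again
in powers of `u⁻¹`. -/
def shiftVar (c : ℂ) (f : PowerSeries A) : PowerSeries A :=
  PowerSeries.mk fun n => ∑ r ∈ Finset.range (n + 1),
    ((-1 : ℂ) ^ (n - r) * ((n - 1).choose (n - r) : ℂ) * c ^ (n - r)) •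
      PowerSeries.coeff r f

open Classical in
/-- A series in the single variable `u⁻¹`, viewed as a two-variable series placed in
the `k`-th variable. -/
def inVar (k : Fin 2) (f : PowerSeries A) : MvPowerSeries (Fin 2) A := fun m =>
  if m = Finsupp.single k (m k) then PowerSeries.coeff (m k) f else 0

/-- `f(u)` as a series in the two variables `x = u⁻¹`, `y = v⁻¹`. -/
abbrev inX (f : PowerSeries A) : MvPowerSeries (Fin 2) A := inVar 0 f

/-- `f(v)` as a series in the two variables `x = u⁻¹`, `y = v⁻¹`. -/
abbrev inY (f : PowerSeries A) : MvPowerSeries (Fin 2) A := inVar 1 f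

/-- `x = u⁻¹` as a two-variable series. -/
def Xv : MvPowerSeries (Fin 2) A := MvPowerSeries.X 0

/-- `y = v⁻¹` as a two-variable series. -/
def Yv : MvPowerSeries (Fin 2) A := MvPowerSeries.X 1

/-- The left-hand side `(u²-v²)[s_{ij}(u), s_{kl}(v)]` of the quaternary relation,
multiplied by `x²y²` (where `x = u⁻¹`, `y = v⁻¹`) to clear negative powers. -/
def quatLHS {N : ℕ} (s : Fin N → Fin N → PowerSeries A) (i j k l : Fin N) :
    MvPowerSeries (Fin 2) A :=
  (Yv ^ 2 - Xv ^ 2) * ⁅inX (s i j), inY (s k l)⁆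

/-- The right-hand side of the quaternary relation, multiplied by `x²y²`. -/
def quatRHS {N : ℕ} (s : Fin N → Fin N → PowerSeries A) (i j k l : Fin N) :
    MvPowerSeries (Fin 2) A :=
  Xv * Yv * (Xv + Yv) * (inX (s k j) * inY (s i l) - inY (s k j) * inX (s i l))
    - Xv * Yv * (Yv - Xv) * (inX (s i k) * inY (s j l) - inY (s k i) * inX (s l j))
    + Xv ^ 2 * Yv ^ 2 * (inX (s k i) * inY (s j l) - inY (s k i) * inX (s j l))

/-- The quaternary relation (2.2). -/
def QuatRel {N : ℕ} (s : Fin N → Fin N → PowerSeries A) : Prop :=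
  ∀ i j k l : Fin N, quatLHS s i j k l = quatRHS s i j k l

/-- `s_{ij}(u) = δ_{ij} + Σ_{r≥1} s_{ij}^{(r)} u^{-r}`. -/
def HasDeltaConst {N : ℕ} (s : Fin N → Fin N → PowerSeries A) : Prop :=
  ∀ i j : Fin N, PowerSeries.constantCoeff (s i j) = if i = j then 1 else 0

/-- The symmetry relation `s_{ji}(-u) = s_{ij}(u) + (s_{ij}(u) - s_{ij}(-u))/(2u)`. -/
def SymRel {N : ℕ} (s : Fin N → Fin N → PowerSeries A) : Prop :=
  ∀ i j : Fin N,
    negVar (s j i)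
      = s i j + (2 : ℂ)⁻¹ • (PowerSeries.X * (s i j - negVar (s i j)))

/-- The upper unitriangular matrix `E(u)` with entries `e_{ij}(u)`, `i < j`. -/
def upperMat {N : ℕ} (e : Fin N → Fin N → PowerSeries A) :
    Matrix (Fin N) (Fin N) (PowerSeries A) :=
  Matrix.of fun i j => if i = j then 1 else if i < j then e i j else 0

/-- The lower unitriangular matrix `F(u)` with entries `f_{ji}(u)`, `i < j`. -/
def lowerMat {N : ℕ} (f : Fin N → Fin N → PowerSeries A) :
    Matrix (Fin N) (Fin N) (PowerSeries A) :=
  Matrix.of fun i j => if i = j then 1 else if j < i then f i j else 0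

/-- The (unique) Gauss decomposition `S(u) = F(u) D(u) E(u)`: `D(u)` diagonal with
entries `d_i(u)` having constant term `1`, `E(u)` upper unitriangular with entries
`e_{ij}(u)` (for `i < j`), `F(u)` lower unitriangular with entries `f_{ji}(u)`. -/
structure IsGaussDecomp {N : ℕ} (s : Fin N → Fin N → PowerSeries A)
    (d : Fin N → PowerSeries A) (e f : Fin N → Fin N → PowerSeries A) : Prop where
  d_const : ∀ i, PowerSeries.constantCoeff (d i) = 1
  e_const : ∀ i j : Fin N, i < j → PowerSeries.constantCoeff (e i j) = 0
  f_const : ∀ i j : Fin N, i < j → PowerSeries.constantCoeff (f j i) = 0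
  decomp : Matrix.of s = lowerMat f * Matrix.diagonal d * upperMat e

/-- `b_{ji}(u) = f_{ji}(u - i/2)`; the indices `j i` here are 0-based, so the paper's
(1-based) index `i` equals `(i : ℕ) + 1`. -/
def bSeriesAt {N : ℕ} (f : Fin N → Fin N → PowerSeries A) (j i : Fin N) :
    PowerSeries A :=
  shiftVar (-(((i : ℕ) : ℂ) + 1) / 2) (f j i)

/-- `h_0(u) = d_1(u)` and, for `k ≥ 1`, `h_k(u) = d̃_k(u - k/2) d_{k+1}(u - k/2)`;
the index `k` here is the paper's index, while the entries of `d`, `dt` are indexed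
0-based (so the paper's `d_m` is `d ⟨m-1⟩`). -/
def hSeriesAt {N : ℕ} (d dt : Fin N → PowerSeries A) (k : Fin N) :
    PowerSeries A :=
  if _h : (k : ℕ) = 0 then d k
  else
    shiftVar (-((k : ℕ) : ℂ) / 2) (dt ⟨(k : ℕ) - 1, by have := k.isLt; omega⟩) *
      shiftVar (-((k : ℕ) : ℂ) / 2) (d k)

/-- The free algebra on the generators `s_{ij}^{(r)}`, `r ≥ 1` (the triple
`(i, j, n)` encodes `s_{ij}^{(n+1)}`). -/
abbrev FA (N : ℕ) := FreeAlgebra ℂ (Fin N × Fin N × ℕ)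

/-- The generating series `s_{ij}(u)` of the free algebra. -/
def sFree (N : ℕ) (i j : Fin N) : PowerSeries (FA N) :=
  PowerSeries.mk fun r =>
    match r with
    | 0 => if i = j then 1 else 0
    | n + 1 => FreeAlgebra.ι ℂ (i, j, n)

/-- The defining relations of the extended twisted Yangian `X_N`: all coefficients
of the quaternary relations. -/
inductive XRel (N : ℕ) : FA N → FA N → Prop
  | quat (i j k l : Fin N) (m : Fin 2 →₀ ℕ) :
      XRel N (MvPowerSeries.coeff m (quatLHS (sFree N) i j k l))
        (MvPowerSeries.coeff m (quatRHS (sFree N) i j k l))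

/-- The extended twisted Yangian `X_N`. -/
abbrev Xt (N : ℕ) := RingQuot (XRel N)

/-- The generating series `s_{ij}(u)` of `X_N`. -/
def sX (N : ℕ) (i j : Fin N) : PowerSeries (Xt N) :=
  PowerSeries.map (RingQuot.mkRingHom (XRel N)) (sFree N i j)

/-- The defining relations of the twisted Yangian `Y_N`: the quaternary relations
together with the symmetry relation `s_{11}(u) = s_{11}(-u)`. -/
inductive YRel (N : ℕ) : FA N → FA N → Prop
  | quat (i j k l : Fin N) (m : Fin 2 →₀ ℕ) :
      YRel N (MvPowerSeries.coeff m (quatLHS (sFree N) i j k l))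
        (MvPowerSeries.coeff m (quatRHS (sFree N) i j k l))
  | symm (h : 0 < N) (n : ℕ) :
      YRel N (PowerSeries.coeff n (sFree N ⟨0, h⟩ ⟨0, h⟩))
        (PowerSeries.coeff n (negVar (sFree N ⟨0, h⟩ ⟨0, h⟩)))

/-- The twisted Yangian `Y_N`. -/
abbrev Yt (N : ℕ) := RingQuot (YRel N)

/-- The generating series `s_{ij}(u)` of `Y_N`. -/
def sY (N : ℕ) (i j : Fin N) : PowerSeries (Yt N) :=
  PowerSeries.map (RingQuot.mkRingHom (YRel N)) (sFree N i j)

/-- `x` is fixed by every (auto)morphism `ν_g : S(u) ↦ g(u) S(u)` of `Y_N`, where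
`g(u) ∈ 1 + u⁻²ℂ[[u⁻²]]`. -/
def SYcond (N : ℕ) (x : Yt N) : Prop :=
  ∀ (φ : Yt N →ₐ[ℂ] Yt N) (g : PowerSeries ℂ),
    PowerSeries.constantCoeff g = 1 →
    (∀ n : ℕ, PowerSeries.coeff (2 * n + 1) g = 0) →
    (∀ i j : Fin N,
      PowerSeries.map (φ : Yt N →+* Yt N) (sY N i j)
        = PowerSeries.map (algebraMap ℂ (Yt N)) g * sY N i j) →
    φ x = x

/-- The special twisted Yangian `SY_N`, as the subalgebra of `Y_N` of elements
stable under all automorphisms `ν_g`. -/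
def specialSubalgebra (N : ℕ) : Subalgebra ℂ (Yt N) where
  carrier := {x | SYcond N x}
  mul_mem' := fun ha hb φ g h1 h2 h3 => by
    rw [map_mul, ha φ g h1 h2 h3, hb φ g h1 h2 h3]
  one_mem' := fun φ _ _ _ _ => map_one φ
  add_mem' := fun ha hb φ g h1 h2 h3 => by
    rw [map_add, ha φ g h1 h2 h3, hb φ g h1 h2 h3]
  zero_mem' := fun φ _ _ _ _ => map_zero φ
  algebraMap_mem' := fun c φ _ _ _ _ => φ.commutes c

/-- `x < y` for an explicitly given linear order. -/
def ltOf {G : Type*} (L : LinearOrder G) (x y : G) : Prop :=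
  L.toPartialOrder.toPreorder.toLT.lt x y

/-- The ordered monomial attached to a finitely supported exponent function `m`,
with the generators multiplied in increasing order relative to the linear order
`L`. -/
def orderedMonomial {R : Type*} [Ring R] {G : Type*} (L : LinearOrder G)
    (elem : G → R) (m : G →₀ ℕ) : R :=
  letI := L
  ((m.support.sort (· ≤ ·)).map fun g => elem g ^ m g).prod
section Aux

variable {A : Type*} [Ring A] [Algebra ℂ A]

private def pr (a b : ℕ) : Fin 2 →₀ ℕ := Finsupp.single 0 a + Finsupp.single 1 b

private lemma pr_apply_zero (a b : ℕ) : pr a b 0 = a := by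
  simp [pr, Finsupp.single_apply]

private lemma pr_apply_one (a b : ℕ) : pr a b 1 = b := by
  simp [pr, Finsupp.single_apply]

private lemma eq_pr (m : Fin 2 →₀ ℕ) : m = pr (m 0) (m 1) := by
  ext i
  fin_cases i <;> simp [pr, Finsupp.single_apply]

private lemma pr_add (a b c d : ℕ) : pr a b + pr c d = pr (a + c) (b + d) := by
  ext i
  fin_cases i <;> simp [pr, Finsupp.single_apply]

private lemma pr_le {a b p q : ℕ} : pr a b ≤ pr p q ↔ a ≤ p ∧ b ≤ q := by
  rw [Finsupp.le_def]
  constructor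
  · intro h
    exact ⟨by simpa [pr_apply_zero] using h 0, by simpa [pr_apply_one] using h 1⟩
  · rintro ⟨h1, h2⟩ i
    fin_cases i <;> simp [pr_apply_zero, pr_apply_one, h1, h2]

private lemma pr_sub (a b p q : ℕ) : pr p q - pr a b = pr (p - a) (q - b) := by
  ext i
  fin_cases i <;> simp [pr, Finsupp.single_apply, Finsupp.tsub_apply]

end Aux
set_option linter.unusedSectionVars false
section Aux2

variable {A : Type*} [Ring A] [Algebra ℂ A]

private lemma coeff_inVar (k : Fin 2) (f : PowerSeries A) (m : Fin 2 →₀ ℕ) :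
    MvPowerSeries.coeff m (inVar k f)
      = if m = Finsupp.single k (m k) then PowerSeries.coeff (m k) f else 0 := by
  classical
  rfl

private lemma coeff_XY (f g : PowerSeries A) (c d : ℕ) :
    MvPowerSeries.coeff (pr c d) (inX f * inY g)
      = PowerSeries.coeff c f * PowerSeries.coeff d g := by
  classical
  rw [MvPowerSeries.coeff_mul]
  rw [Finset.sum_eq_single ((Finsupp.single (0 : Fin 2) c, Finsupp.single (1 : Fin 2) d))]
  · rw [coeff_inVar, coeff_inVar]
    simp [Finsupp.single_apply]
  · rintro ⟨u, v⟩ hp hne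
    rw [Finset.HasAntidiagonal.mem_antidiagonal] at hp
    rw [coeff_inVar, coeff_inVar]
    by_cases h1 : u = Finsupp.single 0 (u 0)
    · by_cases h2 : v = Finsupp.single 1 (v 1)
      · exfalso
        apply hne
        have h0 : u 0 + v 0 = c := by
          have := DFunLike.congr_fun hp 0
          simpa [pr_apply_zero] using this
        have hv0 : v 0 = 0 := by
          conv_lhs => rw [h2]
          simp [Finsupp.single_apply]
        have h1' : u 1 + v 1 = d := by
          have := DFunLike.congr_fun hp 1
          simpa [pr_apply_one] using this
        have hu1 : u 1 = 0 := by
          conv_lhs => rw [h1]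
          simp [Finsupp.single_apply]
        have hu : u = Finsupp.single 0 c := by rw [h1]; congr 1; omega
        have hv : v = Finsupp.single 1 d := by rw [h2]; congr 1; omega
        simp [hu, hv]
      · rw [if_neg h2, mul_zero]
    · rw [if_neg h1, zero_mul]
  · intro h
    exact absurd (Finset.HasAntidiagonal.mem_antidiagonal.mpr (by rw [pr])) h

private lemma coeff_YX (f g : PowerSeries A) (c d : ℕ) :
    MvPowerSeries.coeff (pr c d) (inY g * inX f)
      = PowerSeries.coeff d g * PowerSeries.coeff c f := by
  classical
  rw [MvPowerSeries.coeff_mul]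
  rw [Finset.sum_eq_single ((Finsupp.single (1 : Fin 2) d, Finsupp.single (0 : Fin 2) c))]
  · rw [coeff_inVar, coeff_inVar]
    simp [Finsupp.single_apply]
  · rintro ⟨u, v⟩ hp hne
    rw [Finset.HasAntidiagonal.mem_antidiagonal] at hp
    rw [coeff_inVar, coeff_inVar]
    by_cases h1 : u = Finsupp.single 1 (u 1)
    · by_cases h2 : v = Finsupp.single 0 (v 0)
      · exfalso
        apply hne
        have h0 : u 0 + v 0 = c := by
          have := DFunLike.congr_fun hp 0
          simpa [pr_apply_zero] using this
        have hu0 : u 0 = 0 := by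
          conv_lhs => rw [h1]
          simp [Finsupp.single_apply]
        have h1' : u 1 + v 1 = d := by
          have := DFunLike.congr_fun hp 1
          simpa [pr_apply_one] using this
        have hv1 : v 1 = 0 := by
          conv_lhs => rw [h2]
          simp [Finsupp.single_apply]
        have hu : u = Finsupp.single 1 d := by rw [h1]; congr 1; omega
        have hv : v = Finsupp.single 0 c := by rw [h2]; congr 1; omega
        simp [hu, hv]
      · rw [if_neg h2, mul_zero]
    · rw [if_neg h1, zero_mul]
  · intro h
    exact absurd (Finset.HasAntidiagonal.mem_antidiagonal.mpr (by rw [pr, add_comm])) h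

/-- Monomial `x^a y^b`. -/
private def Mxy (a b : ℕ) : MvPowerSeries (Fin 2) A := MvPowerSeries.monomial (pr a b) 1

private lemma Mxy_mul (a b c d : ℕ) :
    (Mxy a b : MvPowerSeries (Fin 2) A) * Mxy c d = Mxy (a + c) (b + d) := by
  rw [Mxy, Mxy, Mxy, MvPowerSeries.monomial_mul_monomial, one_mul, pr_add]

private lemma Xv_eq : (Xv : MvPowerSeries (Fin 2) A) = Mxy 1 0 := by
  have h : pr 1 0 = Finsupp.single (0 : Fin 2) 1 := by
    ext i
    fin_cases i <;> simp [pr, Finsupp.single_apply]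
  rw [Xv, MvPowerSeries.X_def, Mxy, h]

private lemma Yv_eq : (Yv : MvPowerSeries (Fin 2) A) = Mxy 0 1 := by
  have h : pr 0 1 = Finsupp.single (1 : Fin 2) 1 := by
    ext i
    fin_cases i <;> simp [pr, Finsupp.single_apply]
  rw [Yv, MvPowerSeries.X_def, Mxy, h]

private lemma coeff_Mxy_mul (a b : ℕ) (W : MvPowerSeries (Fin 2) A) (p q : ℕ) :
    MvPowerSeries.coeff (pr p q) ((Mxy a b : MvPowerSeries (Fin 2) A) * W)
      = if a ≤ p ∧ b ≤ q then MvPowerSeries.coeff (pr (p - a) (q - b)) W else 0 := by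
  classical
  rw [Mxy, MvPowerSeries.coeff_monomial_mul]
  by_cases h : a ≤ p ∧ b ≤ q
  · rw [if_pos (pr_le.mpr h), if_pos h, pr_sub, one_mul]
  · rw [if_neg (fun hc => h (pr_le.mp hc)), if_neg h]

/-- Evaluation `y ↦ -x`, i.e. `v = -u`. -/
private def ev : MvPowerSeries (Fin 2) A →+ PowerSeries A where
  toFun F := PowerSeries.mk fun N => ∑ p ∈ Finset.HasAntidiagonal.antidiagonal N,
    ((-1 : ℂ) ^ p.2) • MvPowerSeries.coeff (pr p.1 p.2) F
  map_zero' := by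
    ext n
    simp
  map_add' F G := by
    ext n
    simp [Finset.sum_add_distrib]

private lemma coeff_ev (F : MvPowerSeries (Fin 2) A) (N : ℕ) :
    PowerSeries.coeff N (ev F) = ∑ p ∈ Finset.HasAntidiagonal.antidiagonal N,
      ((-1 : ℂ) ^ p.2) • MvPowerSeries.coeff (pr p.1 p.2) F := by
  simp [ev]

private lemma coeff_csmul (c : ℂ) (f : PowerSeries A) (n : ℕ) :
    PowerSeries.coeff n (c • f) = c • PowerSeries.coeff n f := rfl

end Aux2
section Aux3

variable {A : Type*} [Ring A] [Algebra ℂ A]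

private lemma coeff_negVar (g : PowerSeries A) (n : ℕ) :
    PowerSeries.coeff n (negVar g) = ((-1 : ℂ) ^ n) • PowerSeries.coeff n g := by
  simp [negVar]

private lemma ev_term (a b : ℕ) (f g : PowerSeries A) :
    ev ((Mxy a b : MvPowerSeries (Fin 2) A) * (inX f * inY g))
      = ((-1 : ℂ) ^ b) • ((PowerSeries.X : PowerSeries A) ^ (a + b) * (f * negVar g)) := by
  ext N
  rw [coeff_ev, coeff_csmul, PowerSeries.coeff_X_pow_mul']
  by_cases hab : a + b ≤ N
  · rw [if_pos hab, PowerSeries.coeff_mul, Finset.smul_sum]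
    have hterm : ∀ p ∈ Finset.HasAntidiagonal.antidiagonal N,
        ((-1 : ℂ) ^ p.2) • MvPowerSeries.coeff (pr p.1 p.2) (Mxy a b * (inX f * inY g))
          = if a ≤ p.1 ∧ b ≤ p.2 then
              ((-1 : ℂ) ^ p.2) • (PowerSeries.coeff (p.1 - a) f * PowerSeries.coeff (p.2 - b) g)
            else 0 := by
      intro p _
      rw [coeff_Mxy_mul]
      split_ifs with h
      · rw [coeff_XY]
      · rw [smul_zero]
    rw [Finset.sum_congr rfl hterm, Finset.sum_ite, Finset.sum_const_zero, add_zero]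
    refine Finset.sum_bij' (fun p _ => (p.1 - a, p.2 - b)) (fun q _ => (q.1 + a, q.2 + b))
      ?_ ?_ ?_ ?_ ?_
    · rintro ⟨p1, p2⟩ hp
      simp only [Finset.mem_filter, Finset.HasAntidiagonal.mem_antidiagonal] at hp
      simp only [Finset.HasAntidiagonal.mem_antidiagonal]
      omega
    · rintro ⟨q1, q2⟩ hq
      simp only [Finset.HasAntidiagonal.mem_antidiagonal] at hq
      simp only [Finset.mem_filter, Finset.HasAntidiagonal.mem_antidiagonal]
      omega
    · rintro ⟨p1, p2⟩ hp
      simp only [Finset.mem_filter, Finset.HasAntidiagonal.mem_antidiagonal] at hp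
      simp only [Prod.mk.injEq]
      omega
    · rintro ⟨q1, q2⟩ _
      simp
    · rintro ⟨p1, p2⟩ hp
      simp only [Finset.mem_filter, Finset.HasAntidiagonal.mem_antidiagonal] at hp
      dsimp only
      rw [coeff_negVar, mul_smul_comm, smul_smul, ← pow_add]
      congr 2
      omega
  · rw [if_neg hab, smul_zero]
    refine Finset.sum_eq_zero ?_
    rintro ⟨p1, p2⟩ hp
    simp only [Finset.HasAntidiagonal.mem_antidiagonal] at hp
    rw [coeff_Mxy_mul, if_neg (by omega), smul_zero]

private lemma ev_term' (a b : ℕ) (f g : PowerSeries A) :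
    ev ((Mxy a b : MvPowerSeries (Fin 2) A) * (inY g * inX f))
      = ((-1 : ℂ) ^ b) • ((PowerSeries.X : PowerSeries A) ^ (a + b) * (negVar g * f)) := by
  ext N
  rw [coeff_ev, coeff_csmul, PowerSeries.coeff_X_pow_mul']
  by_cases hab : a + b ≤ N
  · rw [if_pos hab, PowerSeries.coeff_mul, Finset.smul_sum]
    have hterm : ∀ p ∈ Finset.HasAntidiagonal.antidiagonal N,
        ((-1 : ℂ) ^ p.2) • MvPowerSeries.coeff (pr p.1 p.2) (Mxy a b * (inY g * inX f))
          = if a ≤ p.1 ∧ b ≤ p.2 then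
              ((-1 : ℂ) ^ p.2) • (PowerSeries.coeff (p.2 - b) g * PowerSeries.coeff (p.1 - a) f)
            else 0 := by
      intro p _
      rw [coeff_Mxy_mul]
      split_ifs with h
      · rw [coeff_YX]
      · rw [smul_zero]
    rw [Finset.sum_congr rfl hterm, Finset.sum_ite, Finset.sum_const_zero, add_zero]
    refine Finset.sum_bij' (fun p _ => (p.2 - b, p.1 - a)) (fun q _ => (q.2 + a, q.1 + b))
      ?_ ?_ ?_ ?_ ?_
    · rintro ⟨p1, p2⟩ hp
      simp only [Finset.mem_filter, Finset.HasAntidiagonal.mem_antidiagonal] at hp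
      simp only [Finset.HasAntidiagonal.mem_antidiagonal]
      omega
    · rintro ⟨q1, q2⟩ hq
      simp only [Finset.HasAntidiagonal.mem_antidiagonal] at hq
      simp only [Finset.mem_filter, Finset.HasAntidiagonal.mem_antidiagonal]
      omega
    · rintro ⟨p1, p2⟩ hp
      simp only [Finset.mem_filter, Finset.HasAntidiagonal.mem_antidiagonal] at hp
      simp only [Prod.mk.injEq]
      omega
    · rintro ⟨q1, q2⟩ _
      simp
    · rintro ⟨p1, p2⟩ hp
      simp only [Finset.mem_filter, Finset.HasAntidiagonal.mem_antidiagonal] at hp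
      dsimp only
      rw [coeff_negVar, smul_mul_assoc, smul_smul, ← pow_add]
      congr 2
      omega
  · rw [if_neg hab, smul_zero]
    refine Finset.sum_eq_zero ?_
    rintro ⟨p1, p2⟩ hp
    simp only [Finset.HasAntidiagonal.mem_antidiagonal] at hp
    rw [coeff_Mxy_mul, if_neg (by omega), smul_zero]

end Aux3
section Aux4

variable {A : Type*} [Ring A] [Algebra ℂ A]

private lemma ev_quatLHS {N : ℕ} (s : Fin N → Fin N → PowerSeries A) (i j k l : Fin N) :
    ev (quatLHS s i j k l) = 0 := by
  have h1 : (Yv : MvPowerSeries (Fin 2) A) ^ 2 = Mxy 0 2 := by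
    rw [sq, Yv_eq, Mxy_mul]
  have h2 : (Xv : MvPowerSeries (Fin 2) A) ^ 2 = Mxy 2 0 := by
    rw [sq, Xv_eq, Mxy_mul]
  have hexp : quatLHS s i j k l =
      Mxy 0 2 * (inX (s i j) * inY (s k l)) - Mxy 0 2 * (inY (s k l) * inX (s i j))
        - (Mxy 2 0 * (inX (s i j) * inY (s k l)) - Mxy 2 0 * (inY (s k l) * inX (s i j))) := by
    rw [quatLHS, Ring.lie_def, h1, h2]
    noncomm_ring
  rw [hexp, map_sub, map_sub, map_sub, ev_term, ev_term', ev_term, ev_term']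
  norm_num

private lemma ev_quatRHS {N : ℕ} (s : Fin N → Fin N → PowerSeries A) (i j k l : Fin N) :
    ev (quatRHS s i j k l)
      = (-2 : ℂ) • ((PowerSeries.X : PowerSeries A) ^ 3 * (s i k * negVar (s j l)))
        + (2 : ℂ) • ((PowerSeries.X : PowerSeries A) ^ 3 * (negVar (s k i) * s l j))
        + ((PowerSeries.X : PowerSeries A) ^ 4 * (s k i * negVar (s j l))
          - (PowerSeries.X : PowerSeries A) ^ 4 * (negVar (s k i) * s j l)) := by
  have hA : (Xv : MvPowerSeries (Fin 2) A) * Yv * (Xv + Yv) = Mxy 2 1 + Mxy 1 2 := by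
    simp [Xv_eq, Yv_eq, mul_add, Mxy_mul]
  have hB : (Xv : MvPowerSeries (Fin 2) A) * Yv * (Yv - Xv) = Mxy 1 2 - Mxy 2 1 := by
    simp [Xv_eq, Yv_eq, mul_sub, Mxy_mul]
  have hC : (Xv : MvPowerSeries (Fin 2) A) ^ 2 * Yv ^ 2 = Mxy 2 2 := by
    rw [sq, sq, Xv_eq, Yv_eq, Mxy_mul, Mxy_mul, Mxy_mul]
  have hexp : quatRHS s i j k l =
      Mxy 2 1 * (inX (s k j) * inY (s i l)) + Mxy 1 2 * (inX (s k j) * inY (s i l))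
        - Mxy 2 1 * (inY (s k j) * inX (s i l)) - Mxy 1 2 * (inY (s k j) * inX (s i l))
        - (Mxy 1 2 * (inX (s i k) * inY (s j l)) - Mxy 2 1 * (inX (s i k) * inY (s j l)))
        + (Mxy 1 2 * (inY (s k i) * inX (s l j)) - Mxy 2 1 * (inY (s k i) * inX (s l j)))
        + (Mxy 2 2 * (inX (s k i) * inY (s j l)) - Mxy 2 2 * (inY (s k i) * inX (s j l))) := by
    rw [quatRHS, hA, hB, hC]
    noncomm_ring
  rw [hexp]
  rw [map_add, map_add, map_sub, map_sub, map_sub, map_add, map_sub, map_sub, map_sub]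
  rw [ev_term, ev_term, ev_term', ev_term', ev_term, ev_term, ev_term', ev_term',
    ev_term, ev_term']
  norm_num
  module

private lemma X_pow_left_cancel {n : ℕ} {u v : PowerSeries A}
    (h : (PowerSeries.X : PowerSeries A) ^ n * u = PowerSeries.X ^ n * v) : u = v := by
  ext m
  have h2 := congrArg (PowerSeries.coeff (m + n)) h
  rwa [PowerSeries.coeff_X_pow_mul, PowerSeries.coeff_X_pow_mul] at h2

private lemma quat_key {N : ℕ} {s : Fin N → Fin N → PowerSeries A} (hquat : QuatRel s)
    (i j k l : Fin N) :
    (2 : ℂ) • (s i k * negVar (s j l) - negVar (s k i) * s l j)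
      = PowerSeries.X * (s k i * negVar (s j l) - negVar (s k i) * s j l) := by
  have h : ev (quatLHS s i j k l) = ev (quatRHS s i j k l) := by rw [hquat i j k l]
  rw [ev_quatLHS, ev_quatRHS] at h
  apply X_pow_left_cancel (n := 3)
  have e4 : (PowerSeries.X : PowerSeries A) ^ 4 = PowerSeries.X ^ 3 * PowerSeries.X :=
    pow_succ _ 3
  have hz : (PowerSeries.X : PowerSeries A) ^ 3
        * ((2 : ℂ) • (s i k * negVar (s j l) - negVar (s k i) * s l j))
      - PowerSeries.X ^ 3
        * (PowerSeries.X * (s k i * negVar (s j l) - negVar (s k i) * s j l))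
      = -((-2 : ℂ) • ((PowerSeries.X : PowerSeries A) ^ 3 * (s i k * negVar (s j l)))
          + (2 : ℂ) • ((PowerSeries.X : PowerSeries A) ^ 3 * (negVar (s k i) * s l j))
          + ((PowerSeries.X : PowerSeries A) ^ 4 * (s k i * negVar (s j l))
            - (PowerSeries.X : PowerSeries A) ^ 4 * (negVar (s k i) * s j l))) := by
    rw [e4, mul_sub, mul_sub, mul_smul_comm, mul_sub, mul_assoc, mul_assoc]
    module
  rw [← h, neg_zero] at hz
  exact sub_eq_zero.mp hz

private lemma two_smul_eq_zero {x : A} (h : (2 : ℂ) • x = 0) : x = 0 := by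
  have h2 : ((2⁻¹ : ℂ) * 2) • x = 0 := by rw [mul_smul, h, smul_zero]
  norm_num at h2
  exact h2

private lemma smul_X_cancel {c : ℂ} {h : PowerSeries A}
    (hyp : (2 : ℂ) • h = c • (PowerSeries.X * h)) : h = 0 := by
  suffices hh : ∀ n, PowerSeries.coeff n h = 0 by
    ext n
    rw [hh, map_zero]
  intro n
  induction n with
  | zero =>
    apply two_smul_eq_zero
    have h2 := congrArg (PowerSeries.coeff 0) hyp
    rw [coeff_csmul, coeff_csmul, PowerSeries.coeff_zero_eq_constantCoeff, map_mul,
      PowerSeries.constantCoeff_X, zero_mul, smul_zero] at h2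
    simpa using h2
  | succ n ih =>
    apply two_smul_eq_zero
    have h2 := congrArg (PowerSeries.coeff (n + 1)) hyp
    rw [coeff_csmul, coeff_csmul, PowerSeries.coeff_succ_X_mul, ih, smul_zero] at h2
    exact h2

private lemma cancel_right_unit {f g : PowerSeries A}
    (hg : PowerSeries.constantCoeff g = 1) (h : f * g = 0) : f = 0 := by
  suffices hh : ∀ n, PowerSeries.coeff n f = 0 by
    ext n
    rw [hh, map_zero]
  intro n
  induction n using Nat.strong_induction_on with
  | _ n ih =>
    have h0 := congrArg (PowerSeries.coeff n) h
    rw [map_zero, PowerSeries.coeff_mul] at h0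
    rw [Finset.sum_eq_single (n, 0)] at h0
    · rw [PowerSeries.coeff_zero_eq_constantCoeff, hg, mul_one] at h0
      exact h0
    · rintro ⟨p1, p2⟩ hp hne
      simp only [Finset.HasAntidiagonal.mem_antidiagonal] at hp
      have hlt : p1 < n := by
        rcases Nat.lt_or_ge p1 n with h' | h'
        · exact h'
        · exfalso; apply hne
          have : p1 = n := by omega
          subst this
          have : p2 = 0 := by omega
          subst this
          rfl
      rw [ih p1 hlt, zero_mul]
    · intro hmem
      exact absurd (Finset.HasAntidiagonal.mem_antidiagonal.mpr (by simp)) hmem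

end Aux4
theorem statement_0 {A : Type*} [Ring A] [Algebra ℂ A] {N : ℕ} (hN : 0 < N)
    (s : Fin N → Fin N → PowerSeries A)
    (hconst : HasDeltaConst s) (hquat : QuatRel s) :
    s ⟨0, hN⟩ ⟨0, hN⟩ = negVar (s ⟨0, hN⟩ ⟨0, hN⟩) ↔ SymRel s := by
  set z : Fin N := ⟨0, hN⟩ with hz
  have hzc : PowerSeries.constantCoeff (s z z) = 1 := by
    rw [hconst]
    simp
  constructor
  · intro h00
    have key := quat_key (s := s) hquat
    -- Step 1: diagonal relations
    have diag : ∀ i j : Fin N,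
        s i i * negVar (s j j) - negVar (s i i) * s j j = 0 := by
      intro i j
      apply smul_X_cancel (c := (1 : ℂ))
      rw [one_smul]
      exact key i j i j
    have diagEq : ∀ i : Fin N, negVar (s i i) = s i i := by
      intro i
      have hd := diag i z
      rw [← h00] at hd
      have hd2 : (s i i - negVar (s i i)) * s z z = 0 := by
        rw [sub_mul]
        exact hd
      have hzero := cancel_right_unit hzc hd2
      exact (sub_eq_zero.mp hzero).symm
    -- Step 2: basic off-diagonal relation
    have rel : ∀ i k : Fin N,
        (2 : ℂ) • (s i k - negVar (s k i))
          = PowerSeries.X * (s k i - negVar (s k i)) := by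
      intro i k
      have h1 := key i z k z
      rw [← h00] at h1
      have h2 : (((2 : ℂ) • (s i k - negVar (s k i))
            - PowerSeries.X * (s k i - negVar (s k i)))) * s z z = 0 := by
        rw [sub_mul, smul_mul_assoc, sub_mul, mul_assoc, sub_mul, sub_eq_zero]
        exact h1
      have h3 := cancel_right_unit hzc h2
      rwa [sub_eq_zero] at h3
    -- Step 3: evenness of the symmetrization
    have evenp : ∀ i k : Fin N,
        negVar (s i k) + negVar (s k i) = s i k + s k i := by
      intro i k
      have e1 := rel i k
      have e2 := rel k i
      have hsum : (2 : ℂ) • ((s i k + s k i) - (negVar (s i k) + negVar (s k i)))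
          = PowerSeries.X * ((s i k + s k i) - (negVar (s i k) + negVar (s k i))) := by
        have hcomb : (2 : ℂ) • ((s i k + s k i) - (negVar (s i k) + negVar (s k i)))
            = (2 : ℂ) • (s i k - negVar (s k i)) + (2 : ℂ) • (s k i - negVar (s i k)) := by
          module
        rw [hcomb, e1, e2, ← mul_add]
        congr 1
        abel
      have hzero := smul_X_cancel (c := (1 : ℂ)) (by rw [one_smul]; exact hsum)
      have := sub_eq_zero.mp hzero
      exact this.symm
    -- Conclusion
    intro i j
    have r := rel i j
    have e' : s j i - negVar (s j i) = negVar (s i j) - s i j := by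
      rw [sub_eq_sub_iff_add_eq_add, add_comm (s j i)]
      exact (evenp i j).symm
    rw [e'] at r
    have hr := congrArg (fun y => (2⁻¹ : ℂ) • y) r
    rw [smul_smul] at hr
    norm_num at hr
    have hneg : PowerSeries.X * (negVar (s i j) - s i j)
        = -(PowerSeries.X * (s i j - negVar (s i j))) := by
      rw [mul_sub, mul_sub, neg_sub]
    rw [hneg, smul_neg, sub_eq_iff_eq_add] at hr
    nth_rewrite 1 [hr]
    module
  · intro hsym
    have h := hsym z z
    have h2 : (2 : ℂ) • (s z z - negVar (s z z))
        = (-1 : ℂ) • (PowerSeries.X * (s z z - negVar (s z z))) := by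
      have hh := congrArg (fun y => (2 : ℂ) • (s z z - y)) h
      rw [hh]
      module
    have hzero := smul_X_cancel h2
    rwa [sub_eq_zero] at hzero

end TY
end
end

section
/- The subalgebras ȷ(X_M) and ϑ_M(X_N) of the extended twisted Yangian X_{M+N} commute with each other, where ȷ : X_M → X_{M+N} is the natural homomorphism s_{ij}(u) ↦ s_{ij}(u) and ϑ_M : X_N → X_{M+N} is the embedding ϖ_{M+N} ∘ ι_M ∘ ϖ_N. -/
noncomputable section

namespace TY

variable {A : Type*} [Ring A] [Algebra ℂ A]

open Finsupp in
lemma inVar_coeff {k : Fin 2} (f : PowerSeries A) (m : Fin 2 →₀ ℕ) :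
    MvPowerSeries.coeff m (inVar k f)
      = if m = Finsupp.single k (m k) then PowerSeries.coeff (m k) f else 0 := by
  by_cases h : m = Finsupp.single k (m k)
  · rw [if_pos h]
    show (if m = Finsupp.single k (m k) then PowerSeries.coeff (m k) f else 0) = _
    rw [if_pos h]
  · rw [if_neg h]
    show (if m = Finsupp.single k (m k) then PowerSeries.coeff (m k) f else 0) = _
    rw [if_neg h]

lemma inVar_coeff_single {k : Fin 2} (f : PowerSeries A) (n : ℕ) :
    MvPowerSeries.coeff (Finsupp.single k n) (inVar k f) = PowerSeries.coeff n f := by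
  rw [inVar_coeff, if_pos (by simp)]
  simp

lemma inVar_zero (k : Fin 2) : inVar k (0 : PowerSeries A) = 0 := by
  apply MvPowerSeries.ext; intro m
  rw [inVar_coeff]
  simp

lemma inVar_add (k : Fin 2) (f g : PowerSeries A) :
    inVar k (f + g) = inVar k f + inVar k g := by
  apply MvPowerSeries.ext; intro m
  rw [map_add, inVar_coeff, inVar_coeff, inVar_coeff]
  split_ifs <;> simp

lemma inVar_one (k : Fin 2) : inVar k (1 : PowerSeries A) = 1 := by
  apply MvPowerSeries.ext; intro m
  rw [inVar_coeff, MvPowerSeries.coeff_one]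
  by_cases h0 : m = 0
  · subst h0
    rw [if_pos (by simp), if_pos rfl]
    simp [PowerSeries.coeff_zero_eq_constantCoeff]
  · rw [if_neg h0]
    by_cases h : m = Finsupp.single k (m k)
    · rw [if_pos h]
      have hk : m k ≠ 0 := by
        intro hz; rw [hz, Finsupp.single_zero] at h; exact h0 h
      obtain ⟨n, hn⟩ := Nat.exists_eq_succ_of_ne_zero hk
      rw [hn]
      simp [PowerSeries.coeff_one]
    · rw [if_neg h]
set_option linter.unusedSectionVars false

lemma inVar_mul (k : Fin 2) (f g : PowerSeries A) :
    inVar k (f * g) = inVar k f * inVar k g := by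
  classical
  apply MvPowerSeries.ext; intro m
  rw [MvPowerSeries.coeff_mul, inVar_coeff]
  by_cases hm : m = Finsupp.single k (m k)
  · rw [if_pos hm, PowerSeries.coeff_mul]
    refine (Finset.sum_bij_ne_zero (fun p _ _ => (p.1 k, p.2 k)) ?_ ?_ ?_ ?_).symm
    · intro p hp hne
      rw [Finset.HasAntidiagonal.mem_antidiagonal] at hp
      rw [Finset.HasAntidiagonal.mem_antidiagonal]
      calc p.1 k + p.2 k = (p.1 + p.2) k := (Finsupp.add_apply _ _ _).symm
        _ = m k := by rw [hp]
    · intro p hp hpne q hq hqne heq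
      rw [inVar_coeff, inVar_coeff] at hpne hqne
      have hp1 : p.1 = Finsupp.single k (p.1 k) := by
        by_contra hc; rw [if_neg hc, zero_mul] at hpne; exact hpne rfl
      have hp2 : p.2 = Finsupp.single k (p.2 k) := by
        by_contra hc; rw [if_neg hc, mul_zero] at hpne; exact hpne rfl
      have hq1 : q.1 = Finsupp.single k (q.1 k) := by
        by_contra hc; rw [if_neg hc, zero_mul] at hqne; exact hqne rfl
      have hq2 : q.2 = Finsupp.single k (q.2 k) := by
        by_contra hc; rw [if_neg hc, mul_zero] at hqne; exact hqne rfl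
      have h1 : p.1 k = q.1 k := congrArg Prod.fst heq
      have h2 : p.2 k = q.2 k := congrArg Prod.snd heq
      ext : 1
      · rw [hp1, hq1, h1]
      · rw [hp2, hq2, h2]
    · intro q hq hqne
      rw [Finset.HasAntidiagonal.mem_antidiagonal] at hq
      refine ⟨(Finsupp.single k q.1, Finsupp.single k q.2), ?_, ?_, ?_⟩
      · rw [Finset.HasAntidiagonal.mem_antidiagonal, ← Finsupp.single_add, hq, ← hm]
      · rw [inVar_coeff, inVar_coeff]
        simpa using hqne
      · simp
    · intro p hp hne
      rw [inVar_coeff, inVar_coeff] at hne ⊢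
      have hp1 : p.1 = Finsupp.single k (p.1 k) := by
        by_contra hc; rw [if_neg hc, zero_mul] at hne; exact hne rfl
      have hp2 : p.2 = Finsupp.single k (p.2 k) := by
        by_contra hc; rw [if_neg hc, mul_zero] at hne; exact hne rfl
      rw [if_pos hp1, if_pos hp2]
  · rw [if_neg hm]
    refine (Finset.sum_eq_zero ?_).symm
    intro p hp
    rw [Finset.HasAntidiagonal.mem_antidiagonal] at hp
    rw [inVar_coeff, inVar_coeff]
    by_cases h1 : p.1 = Finsupp.single k (p.1 k)
    · by_cases h2 : p.2 = Finsupp.single k (p.2 k)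
      · exfalso
        apply hm
        have : m = Finsupp.single k (p.1 k + p.2 k) := by
          rw [Finsupp.single_add, ← h1, ← h2, hp]
        rw [this]
        simp
      · rw [if_neg h2, mul_zero]
    · rw [if_neg h1, zero_mul]

/-- `inVar` as a ring homomorphism. -/
def inVarHom (k : Fin 2) : PowerSeries A →+* MvPowerSeries (Fin 2) A where
  toFun := inVar k
  map_one' := inVar_one k
  map_mul' := inVar_mul k
  map_zero' := inVar_zero k
  map_add' := inVar_add k

lemma inVarHom_apply (k : Fin 2) (f : PowerSeries A) : inVarHom k f = inVar k f := rfl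

set_option maxHeartbeats 1000000 in
lemma coeff_inVar_mul_inVar {k k' : Fin 2} (hkk : k ≠ k') (f g : PowerSeries A) (p q : ℕ) :
    MvPowerSeries.coeff (Finsupp.single k p + Finsupp.single k' q) (inVar k f * inVar k' g)
      = PowerSeries.coeff p f * PowerSeries.coeff q g := by
  classical
  rw [MvPowerSeries.coeff_mul]
  have hmk : (Finsupp.single k p + Finsupp.single k' q) k = p := by
    rw [Finsupp.add_apply, Finsupp.single_eq_same, Finsupp.single_eq_of_ne hkk, add_zero]
  have hmk' : (Finsupp.single k p + Finsupp.single k' q) k' = q := by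
    rw [Finsupp.add_apply, Finsupp.single_eq_same, Finsupp.single_eq_of_ne hkk.symm, zero_add]
  rw [Finset.sum_eq_single (Finsupp.single k p, Finsupp.single k' q)]
  · rw [inVar_coeff, inVar_coeff]
    simp [Finsupp.single_eq_same]
  · intro b hb hne
    rw [Finset.HasAntidiagonal.mem_antidiagonal] at hb
    rw [inVar_coeff, inVar_coeff]
    by_cases h1 : b.1 = Finsupp.single k (b.1 k)
    · by_cases h2 : b.2 = Finsupp.single k' (b.2 k')
      · exfalso
        apply hne
        have e1 : b.1 k + b.2 k = p := by
          rw [← Finsupp.add_apply, hb, hmk]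
        have e2 : b.1 k' + b.2 k' = q := by
          rw [← Finsupp.add_apply, hb, hmk']
        have hb2k : b.2 k = 0 := by rw [h2, Finsupp.single_eq_of_ne hkk]
        have hb1k' : b.1 k' = 0 := by rw [h1, Finsupp.single_eq_of_ne hkk.symm]
        have : b.1 k = p := by omega
        have h2' : b.2 k' = q := by omega
        ext : 1
        · rw [h1, this]
        · rw [h2, h2']
      · rw [if_neg h2, mul_zero]
    · rw [if_neg h1, zero_mul]
  · intro hnotmem
    exact absurd (by rw [Finset.HasAntidiagonal.mem_antidiagonal]) hnotmem
lemma X_mul_coeff (s : Fin 2) (h : MvPowerSeries (Fin 2) A) (m : Fin 2 →₀ ℕ) :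
    MvPowerSeries.coeff m (MvPowerSeries.X s * h)
      = if Finsupp.single s 1 ≤ m then MvPowerSeries.coeff (m - Finsupp.single s 1) h else 0 := by
  rw [MvPowerSeries.X, MvPowerSeries.coeff_monomial_mul]
  split_ifs <;> simp

lemma cancel_core (h : MvPowerSeries (Fin 2) A) (z : ℤ)
    (H : ∀ m, MvPowerSeries.coeff m ((Yv : MvPowerSeries (Fin 2) A) * h)
      = z • MvPowerSeries.coeff m ((Xv : MvPowerSeries (Fin 2) A) * h)) :
    h = 0 := by
  apply MvPowerSeries.ext; intro m
  rw [map_zero]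
  suffices Hd : ∀ d, ∀ m : Fin 2 →₀ ℕ, m 0 = d → MvPowerSeries.coeff m h = 0 from
    Hd (m 0) m rfl
  intro d
  induction d using Nat.strong_induction_on with
  | _ d IH =>
    intro m hm
    have h1 := H (m + Finsupp.single 1 1)
    rw [Yv, Xv, X_mul_coeff, X_mul_coeff, if_pos le_add_self, add_tsub_cancel_right] at h1
    by_cases hc : Finsupp.single (0 : Fin 2) 1 ≤ m + Finsupp.single 1 1
    · rw [if_pos hc] at h1
      have hm0 : 1 ≤ m 0 := by
        have := hc 0
        simpa using this
      have harg : (m + Finsupp.single 1 1 - Finsupp.single 0 1 : Fin 2 →₀ ℕ) 0 = d - 1 := by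
        rw [Finsupp.tsub_apply, Finsupp.add_apply]
        simp [hm]
      have hz := IH (d - 1) (by omega) _ harg
      rw [hz, smul_zero] at h1
      exact h1
    · rw [if_neg hc, smul_zero] at h1
      exact h1

lemma cancel_sum (h : MvPowerSeries (Fin 2) A)
    (H : ((Xv : MvPowerSeries (Fin 2) A) + Yv) * h = 0) : h = 0 := by
  apply cancel_core h (-1)
  intro m
  have : MvPowerSeries.coeff m ((Xv + Yv) * h) = 0 := by rw [H, map_zero]
  rw [add_mul, map_add] at this
  rw [neg_smul, one_smul]
  exact eq_neg_of_add_eq_zero_right this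

lemma cancel_sub (h : MvPowerSeries (Fin 2) A)
    (H : ((Yv : MvPowerSeries (Fin 2) A) - Xv) * h = 0) : h = 0 := by
  apply cancel_core h 1
  intro m
  have : MvPowerSeries.coeff m ((Yv - Xv) * h) = 0 := by rw [H, map_zero]
  rw [sub_mul, map_sub, sub_eq_zero] at this
  rw [one_smul]
  exact this

lemma cancel_sq (h : MvPowerSeries (Fin 2) A)
    (H : ((Yv : MvPowerSeries (Fin 2) A) ^ 2 - Xv ^ 2) * h = 0) : h = 0 := by
  have hcomm : (Xv : MvPowerSeries (Fin 2) A) * Yv = Yv * Xv :=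
    (MvPowerSeries.commute_X (Xv : MvPowerSeries (Fin 2) A) 1).eq
  have factor : ((Yv : MvPowerSeries (Fin 2) A) ^ 2 - Xv ^ 2) = (Yv - Xv) * (Xv + Yv) := by
    rw [sub_mul, mul_add, mul_add, ← hcomm, pow_two, pow_two]
    abel
  rw [factor, mul_assoc] at H
  exact cancel_sum h (cancel_sub _ H)
/-- All coefficients of `f` commute with all coefficients of `g`. -/
def SC (f g : PowerSeries A) : Prop :=
  ∀ p q : ℕ, Commute (PowerSeries.coeff p f) (PowerSeries.coeff q g)

lemma SC.negVar {f g : PowerSeries A} (h : SC f g) : SC f (negVar g) := by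
  intro p q
  rw [TY.negVar, PowerSeries.coeff_mk]
  exact (h p q).smul_right _

lemma SC.shiftVar {f g : PowerSeries A} (c : ℂ) (h : SC f g) : SC f (shiftVar c g) := by
  intro p q
  rw [TY.shiftVar, PowerSeries.coeff_mk]
  exact Commute.sum_right _ _ _ fun r _ => (h p r).smul_right _

lemma SC_of_matrix_inv {n : ℕ} (f : PowerSeries A)
    (P Q : Matrix (Fin n) (Fin n) (PowerSeries A))
    (h1 : P * Q = 1) (h2 : Q * P = 1) (hP : ∀ a b, SC f (P a b)) :
    ∀ a b, SC f (Q a b) := by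
  intro a b p q
  set x := PowerSeries.coeff p f with hx
  set D : Matrix (Fin n) (Fin n) (PowerSeries A) :=
    Matrix.diagonal (fun _ => PowerSeries.C x) with hD
  have hDP : D * P = P * D := by
    ext c d r
    rw [hD, Matrix.diagonal_mul, Matrix.mul_diagonal, PowerSeries.coeff_C_mul,
      PowerSeries.coeff_mul_C]
    exact (hP c d p r).eq
  have hDQ : D * Q = Q * D := by
    calc D * Q = Q * P * D * Q := by rw [h2, one_mul]
      _ = Q * (P * D) * Q := by rw [Matrix.mul_assoc Q P D]
      _ = Q * (D * P) * Q := by rw [hDP]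
      _ = Q * D * (P * Q) := by
            rw [← Matrix.mul_assoc Q D P, Matrix.mul_assoc (Q * D) P Q]
      _ = Q * D := by rw [h1, Matrix.mul_one]
  have := congrFun (congrFun hDQ a) b
  rw [hD, Matrix.diagonal_mul, Matrix.mul_diagonal] at this
  have hq := congrArg (PowerSeries.coeff q) this
  rw [PowerSeries.coeff_C_mul, PowerSeries.coeff_mul_C] at hq
  exact hq

lemma map_negVar {B : Type*} [Ring B] [Algebra ℂ B] (φ : A →ₐ[ℂ] B) (f : PowerSeries A) :
    PowerSeries.map (φ : A →+* B) (negVar f) = negVar (PowerSeries.map (φ : A →+* B) f) := by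
  apply PowerSeries.ext; intro n
  rw [PowerSeries.coeff_map, negVar, negVar, PowerSeries.coeff_mk, PowerSeries.coeff_mk,
    PowerSeries.coeff_map]
  exact map_smul φ _ _

lemma map_shiftVar {B : Type*} [Ring B] [Algebra ℂ B] (φ : A →ₐ[ℂ] B) (c : ℂ)
    (f : PowerSeries A) :
    PowerSeries.map (φ : A →+* B) (shiftVar c f)
      = shiftVar c (PowerSeries.map (φ : A →+* B) f) := by
  apply PowerSeries.ext; intro n
  rw [PowerSeries.coeff_map, shiftVar, shiftVar, PowerSeries.coeff_mk, PowerSeries.coeff_mk,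
    map_sum]
  refine Finset.sum_congr rfl fun r _ => ?_
  rw [PowerSeries.coeff_map]
  exact map_smul φ _ _
lemma rearr (c p q r w : MvPowerSeries (Fin 2) A) (hc : ∀ z, c * z = z * c) :
    p * (c * (q * r)) * w = c * ((p * q) * (r * w)) := by
  rw [← mul_assoc p c, ← hc p]
  simp only [mul_assoc]

lemma sumB {n : ℕ} (T1 T2 : Fin n → MvPowerSeries (Fin 2) A)
    (P : MvPowerSeries (Fin 2) A) (hP : ∀ z, P * z = z * P)
    (w x : Fin n → MvPowerSeries (Fin 2) A) (hx : (∑ b, x b * T2 b) = 0) :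
    (∑ a, ∑ b, T1 a * (P * (w a * x b)) * T2 b) = 0 := by
  refine Finset.sum_eq_zero fun a _ => ?_
  calc (∑ b, T1 a * (P * (w a * x b)) * T2 b)
      = ∑ b, P * ((T1 a * w a) * (x b * T2 b)) :=
        Finset.sum_congr rfl fun b _ => rearr P (T1 a) (w a) (x b) (T2 b) hP
    _ = P * ((T1 a * w a) * ∑ b, x b * T2 b) := by
        rw [Finset.mul_sum, Finset.mul_sum]
    _ = 0 := by rw [hx, mul_zero, mul_zero]

lemma sumA {n : ℕ} (T1 T2 : Fin n → MvPowerSeries (Fin 2) A)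
    (P : MvPowerSeries (Fin 2) A) (hP : ∀ z, P * z = z * P)
    (w x : Fin n → MvPowerSeries (Fin 2) A) (hw : (∑ a, T1 a * w a) = 0) :
    (∑ a, ∑ b, T1 a * (P * (w a * x b)) * T2 b) = 0 := by
  have step : ∀ a b, T1 a * (P * (w a * x b)) * T2 b = P * ((T1 a * w a) * (x b * T2 b)) :=
    fun a b => rearr P (T1 a) (w a) (x b) (T2 b) hP
  calc (∑ a, ∑ b, T1 a * (P * (w a * x b)) * T2 b)
      = ∑ b, ∑ a, P * ((T1 a * w a) * (x b * T2 b)) := by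
        rw [Finset.sum_comm]
        exact Finset.sum_congr rfl fun b _ => Finset.sum_congr rfl fun a _ => step a b
    _ = ∑ b : Fin n, P * ((∑ a, T1 a * w a) * (x b * T2 b)) := by
        refine Finset.sum_congr rfl fun b _ => ?_
        rw [Finset.sum_mul, Finset.mul_sum]
    _ = 0 := by
        refine Finset.sum_eq_zero fun b _ => ?_
        rw [hw, zero_mul, mul_zero]

lemma sumMain1 {n : ℕ} (T1 T2 : Fin n → MvPowerSeries (Fin 2) A)
    (c U : MvPowerSeries (Fin 2) A) (hc : ∀ z, c * z = z * c)
    (Ys : Fin n → Fin n → MvPowerSeries (Fin 2) A) (k0 : Fin n)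
    (hcon : ∀ b, (∑ a, T1 a * Ys a b) = if k0 = b then 1 else 0) :
    (∑ a, ∑ b, T1 a * (c * (Ys a b * U)) * T2 b) = c * (U * T2 k0) := by
  calc (∑ a, ∑ b, T1 a * (c * (Ys a b * U)) * T2 b)
      = ∑ b, ∑ a, c * ((T1 a * Ys a b) * (U * T2 b)) := by
        rw [Finset.sum_comm]
        exact Finset.sum_congr rfl fun b _ => Finset.sum_congr rfl fun a _ =>
          rearr c (T1 a) (Ys a b) U (T2 b) hc
    _ = ∑ b, c * ((∑ a, T1 a * Ys a b) * (U * T2 b)) := by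
        refine Finset.sum_congr rfl fun b _ => ?_
        rw [Finset.sum_mul, Finset.mul_sum]
    _ = ∑ b, if k0 = b then c * (U * T2 b) else 0 := by
        refine Finset.sum_congr rfl fun b _ => ?_
        rw [hcon b]
        split_ifs
        · rw [one_mul]
        · rw [zero_mul, mul_zero]
    _ = c * (U * T2 k0) := by
        rw [Finset.sum_ite_eq Finset.univ k0 (fun b => c * (U * T2 b))]
        rw [if_pos (Finset.mem_univ k0)]

lemma sumMain2 {n : ℕ} (T1 T2 : Fin n → MvPowerSeries (Fin 2) A)
    (c U : MvPowerSeries (Fin 2) A) (hc : ∀ z, c * z = z * c)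
    (Ys : Fin n → Fin n → MvPowerSeries (Fin 2) A) (l0 : Fin n)
    (hcon : ∀ a, (∑ b, Ys a b * T2 b) = if a = l0 then 1 else 0) :
    (∑ a, ∑ b, T1 a * (c * (U * Ys a b)) * T2 b) = c * (T1 l0 * U) := by
  calc (∑ a, ∑ b, T1 a * (c * (U * Ys a b)) * T2 b)
      = ∑ a, ∑ b, c * ((T1 a * U) * (Ys a b * T2 b)) :=
        Finset.sum_congr rfl fun a _ => Finset.sum_congr rfl fun b _ =>
          rearr c (T1 a) U (Ys a b) (T2 b) hc
    _ = ∑ a, c * ((T1 a * U) * (∑ b, Ys a b * T2 b)) := by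
        refine Finset.sum_congr rfl fun a _ => ?_
        rw [Finset.mul_sum, Finset.mul_sum]
    _ = ∑ a, if a = l0 then c * (T1 a * U) else 0 := by
        refine Finset.sum_congr rfl fun a _ => ?_
        rw [hcon a]
        split_ifs
        · rw [mul_one]
        · rw [mul_zero, mul_zero]
    _ = c * (T1 l0 * U) := by
        rw [Finset.sum_ite_eq' Finset.univ l0 (fun a => c * (T1 a * U))]
        rw [if_pos (Finset.mem_univ l0)]
set_option maxHeartbeats 1000000 in
lemma key_commute {n : ℕ} (s t : Fin n → Fin n → PowerSeries A)
    (hq : QuatRel s)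
    (hst : ∀ a b : Fin n, (∑ c, s a c * t c b) = if a = b then 1 else 0)
    (hts : ∀ a b : Fin n, (∑ c, t a c * s c b) = if a = b then 1 else 0)
    {i j k l : Fin n} (hil : i ≠ l) (hkj : k ≠ j) (hjl : j ≠ l) (hki : k ≠ i) :
    SC (s i j) (t k l) := by
  classical
  -- central elements
  have hXv : ∀ z : MvPowerSeries (Fin 2) A, Commute z Xv := fun z =>
    MvPowerSeries.commute_X z 0
  have hYv : ∀ z : MvPowerSeries (Fin 2) A, Commute z Yv := fun z =>
    MvPowerSeries.commute_X z 1
  have hc : ∀ z : MvPowerSeries (Fin 2) A, ((Yv : MvPowerSeries (Fin 2) A) ^ 2 - Xv ^ 2) * z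
      = z * ((Yv : MvPowerSeries (Fin 2) A) ^ 2 - Xv ^ 2) := fun z =>
    ((((hYv z).pow_right 2).sub_right ((hXv z).pow_right 2)).symm).eq
  have hP1 : ∀ z : MvPowerSeries (Fin 2) A,
      ((Xv : MvPowerSeries (Fin 2) A) * Yv * (Xv + Yv)) * z
        = z * ((Xv : MvPowerSeries (Fin 2) A) * Yv * (Xv + Yv)) := fun z =>
    ((((hXv z).mul_right (hYv z)).mul_right ((hXv z).add_right (hYv z))).symm).eq
  have hP2 : ∀ z : MvPowerSeries (Fin 2) A,
      ((Xv : MvPowerSeries (Fin 2) A) * Yv * (Yv - Xv)) * z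
        = z * ((Xv : MvPowerSeries (Fin 2) A) * Yv * (Yv - Xv)) := fun z =>
    ((((hXv z).mul_right (hYv z)).mul_right ((hYv z).sub_right (hXv z))).symm).eq
  have hP3 : ∀ z : MvPowerSeries (Fin 2) A,
      ((Xv : MvPowerSeries (Fin 2) A) ^ 2 * Yv ^ 2) * z
        = z * ((Xv : MvPowerSeries (Fin 2) A) ^ 2 * Yv ^ 2) := fun z =>
    ((((hXv z).pow_right 2).mul_right ((hYv z).pow_right 2)).symm).eq
  -- contractions mapped into the two-variable ring via `inY`
  have hstY : ∀ a b : Fin n, (∑ c, inY (s a c) * inY (t c b))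
      = if a = b then (1 : MvPowerSeries (Fin 2) A) else 0 := by
    intro a b
    have h2 := congrArg (inVarHom (A := A) 1) (hst a b)
    simp only [map_sum, map_mul, inVarHom_apply] at h2
    rw [h2]
    split_ifs
    · exact inVar_one 1
    · exact inVar_zero 1
  have htsY : ∀ a b : Fin n, (∑ c, inY (t a c) * inY (s c b))
      = if a = b then (1 : MvPowerSeries (Fin 2) A) else 0 := by
    intro a b
    have h2 := congrArg (inVarHom (A := A) 1) (hts a b)
    simp only [map_sum, map_mul, inVarHom_apply] at h2
    rw [h2]
    split_ifs
    · exact inVar_one 1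
    · exact inVar_zero 1
  -- zero contractions
  have z1 : (∑ b, inY (s i b) * inY (t b l)) = (0 : MvPowerSeries (Fin 2) A) := by
    rw [hstY i l, if_neg hil]
  have z3 : (∑ b, inY (s j b) * inY (t b l)) = (0 : MvPowerSeries (Fin 2) A) := by
    rw [hstY j l, if_neg hjl]
  have z2 : (∑ a, inY (t k a) * inY (s a j)) = (0 : MvPowerSeries (Fin 2) A) := by
    rw [htsY k j, if_neg hkj]
  have z4 : (∑ a, inY (t k a) * inY (s a i)) = (0 : MvPowerSeries (Fin 2) A) := by
    rw [htsY k i, if_neg hki]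
  -- the six-fold sum of the RHS of the quaternary relation vanishes
  have hsplit : ∀ a b : Fin n, inY (t k a) * quatRHS s i j a b * inY (t b l)
      = inY (t k a) * ((Xv * Yv * (Xv + Yv)) * (inX (s a j) * inY (s i b))) * inY (t b l)
        - inY (t k a) * ((Xv * Yv * (Xv + Yv)) * (inY (s a j) * inX (s i b))) * inY (t b l)
        - inY (t k a) * ((Xv * Yv * (Yv - Xv)) * (inX (s i a) * inY (s j b))) * inY (t b l)
        + inY (t k a) * ((Xv * Yv * (Yv - Xv)) * (inY (s a i) * inX (s b j))) * inY (t b l)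
        + inY (t k a) * ((Xv ^ 2 * Yv ^ 2) * (inX (s a i) * inY (s j b))) * inY (t b l)
        - inY (t k a) * ((Xv ^ 2 * Yv ^ 2) * (inY (s a i) * inX (s j b))) * inY (t b l) := by
    intro a b
    rw [quatRHS]
    noncomm_ring
  have hzero : (∑ a, ∑ b, inY (t k a) * quatRHS s i j a b * inY (t b l))
      = (0 : MvPowerSeries (Fin 2) A) := by
    calc (∑ a, ∑ b, inY (t k a) * quatRHS s i j a b * inY (t b l))
        = ∑ a : Fin n, ∑ b : Fin n,
            (inY (t k a) * ((Xv * Yv * (Xv + Yv)) * (inX (s a j) * inY (s i b))) * inY (t b l)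
            - inY (t k a) * ((Xv * Yv * (Xv + Yv)) * (inY (s a j) * inX (s i b))) * inY (t b l)
            - inY (t k a) * ((Xv * Yv * (Yv - Xv)) * (inX (s i a) * inY (s j b))) * inY (t b l)
            + inY (t k a) * ((Xv * Yv * (Yv - Xv)) * (inY (s a i) * inX (s b j))) * inY (t b l)
            + inY (t k a) * ((Xv ^ 2 * Yv ^ 2) * (inX (s a i) * inY (s j b))) * inY (t b l)
            - inY (t k a) * ((Xv ^ 2 * Yv ^ 2) * (inY (s a i) * inX (s j b))) * inY (t b l)) :=
          Finset.sum_congr rfl fun a _ => Finset.sum_congr rfl fun b _ => hsplit a b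
      _ = 0 := by
          simp only [Finset.sum_add_distrib, Finset.sum_sub_distrib]
          rw [sumB (fun a => inY (t k a)) (fun b => inY (t b l)) _ hP1
              (fun a => inX (s a j)) (fun b => inY (s i b)) z1]
          rw [sumA (fun a => inY (t k a)) (fun b => inY (t b l)) _ hP1
              (fun a => inY (s a j)) (fun b => inX (s i b)) z2]
          rw [sumB (fun a => inY (t k a)) (fun b => inY (t b l)) _ hP2
              (fun a => inX (s i a)) (fun b => inY (s j b)) z3]
          rw [sumA (fun a => inY (t k a)) (fun b => inY (t b l)) _ hP2
              (fun a => inY (s a i)) (fun b => inX (s b j)) z4]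
          rw [sumB (fun a => inY (t k a)) (fun b => inY (t b l)) _ hP3
              (fun a => inX (s a i)) (fun b => inY (s j b)) z3]
          rw [sumA (fun a => inY (t k a)) (fun b => inY (t b l)) _ hP3
              (fun a => inY (s a i)) (fun b => inX (s j b)) z4]
          abel
  -- the quaternary relation rewritten
  have hq' : ∀ a b : Fin n, ((Yv : MvPowerSeries (Fin 2) A) ^ 2 - Xv ^ 2)
      * (inY (s a b) * inX (s i j) - inX (s i j) * inY (s a b)) = - quatRHS s i j a b := by
    intro a b
    have hqq := hq i j a b
    rw [quatLHS, Ring.lie_def] at hqq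
    rw [← hqq, mul_sub, mul_sub, neg_sub]
  -- main identity
  have main : ((Yv : MvPowerSeries (Fin 2) A) ^ 2 - Xv ^ 2)
      * (inX (s i j) * inY (t k l) - inY (t k l) * inX (s i j)) = 0 := by
    have expand : (∑ a, ∑ b, inY (t k a)
        * (((Yv : MvPowerSeries (Fin 2) A) ^ 2 - Xv ^ 2)
            * (inY (s a b) * inX (s i j) - inX (s i j) * inY (s a b))) * inY (t b l))
        = ((Yv : MvPowerSeries (Fin 2) A) ^ 2 - Xv ^ 2)
            * (inX (s i j) * inY (t k l) - inY (t k l) * inX (s i j)) := by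
      have e1 : (∑ a, ∑ b, inY (t k a)
          * (((Yv : MvPowerSeries (Fin 2) A) ^ 2 - Xv ^ 2) * (inY (s a b) * inX (s i j)))
          * inY (t b l))
          = ((Yv : MvPowerSeries (Fin 2) A) ^ 2 - Xv ^ 2) * (inX (s i j) * inY (t k l)) :=
        sumMain1 (fun a => inY (t k a)) (fun b => inY (t b l)) _ (inX (s i j)) hc
          (fun a b => inY (s a b)) k (fun b => htsY k b)
      have e2 : (∑ a, ∑ b, inY (t k a)
          * (((Yv : MvPowerSeries (Fin 2) A) ^ 2 - Xv ^ 2) * (inX (s i j) * inY (s a b)))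
          * inY (t b l))
          = ((Yv : MvPowerSeries (Fin 2) A) ^ 2 - Xv ^ 2) * (inY (t k l) * inX (s i j)) :=
        sumMain2 (fun a => inY (t k a)) (fun b => inY (t b l)) _ (inX (s i j)) hc
          (fun a b => inY (s a b)) l (fun a => hstY a l)
      calc (∑ a, ∑ b, inY (t k a)
          * (((Yv : MvPowerSeries (Fin 2) A) ^ 2 - Xv ^ 2)
              * (inY (s a b) * inX (s i j) - inX (s i j) * inY (s a b))) * inY (t b l))
          = (∑ a, ∑ b, (inY (t k a)
              * (((Yv : MvPowerSeries (Fin 2) A) ^ 2 - Xv ^ 2) * (inY (s a b) * inX (s i j)))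
              * inY (t b l)
            - inY (t k a)
              * (((Yv : MvPowerSeries (Fin 2) A) ^ 2 - Xv ^ 2) * (inX (s i j) * inY (s a b)))
              * inY (t b l))) := by
            refine Finset.sum_congr rfl fun a _ => Finset.sum_congr rfl fun b _ => ?_
            rw [mul_sub, mul_sub, sub_mul]
        _ = ((Yv : MvPowerSeries (Fin 2) A) ^ 2 - Xv ^ 2) * (inX (s i j) * inY (t k l))
            - ((Yv : MvPowerSeries (Fin 2) A) ^ 2 - Xv ^ 2) * (inY (t k l) * inX (s i j)) := by
            simp only [Finset.sum_sub_distrib]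
            rw [e1, e2]
        _ = ((Yv : MvPowerSeries (Fin 2) A) ^ 2 - Xv ^ 2)
            * (inX (s i j) * inY (t k l) - inY (t k l) * inX (s i j)) := by
            rw [mul_sub]
    rw [← expand]
    calc (∑ a, ∑ b, inY (t k a)
        * (((Yv : MvPowerSeries (Fin 2) A) ^ 2 - Xv ^ 2)
            * (inY (s a b) * inX (s i j) - inX (s i j) * inY (s a b))) * inY (t b l))
        = ∑ a, ∑ b, -(inY (t k a) * quatRHS s i j a b * inY (t b l)) := by
          refine Finset.sum_congr rfl fun a _ => Finset.sum_congr rfl fun b _ => ?_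
          rw [hq' a b, mul_neg, neg_mul]
      _ = -(∑ a, ∑ b, inY (t k a) * quatRHS s i j a b * inY (t b l)) := by
          simp only [Finset.sum_neg_distrib]
      _ = 0 := by rw [hzero, neg_zero]
  -- cancel the regular element and extract coefficients
  have heq : inX (s i j) * inY (t k l) = inY (t k l) * inX (s i j) :=
    sub_eq_zero.mp (cancel_sq _ main)
  intro p q
  have e := congrArg (MvPowerSeries.coeff (Finsupp.single 0 p + Finsupp.single 1 q)) heq
  rw [coeff_inVar_mul_inVar (by decide : (0 : Fin 2) ≠ 1)] at e
  rw [show (Finsupp.single (0 : Fin 2) p + Finsupp.single (1 : Fin 2) q)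
      = Finsupp.single (1 : Fin 2) q + Finsupp.single (0 : Fin 2) p from add_comm _ _] at e
  rw [coeff_inVar_mul_inVar (by decide : (1 : Fin 2) ≠ 0)] at e
  exact Commute.symm e.symm
lemma map_inVarMv {B : Type*} [Ring B] [Algebra ℂ B] (φ : A →+* B) (k : Fin 2) (f : PowerSeries A) :
    MvPowerSeries.map φ (inVar k f) = inVar k (PowerSeries.map φ f) := by
  apply MvPowerSeries.ext; intro m
  rw [MvPowerSeries.coeff_map, inVar_coeff, inVar_coeff, apply_ite φ, map_zero,
    PowerSeries.coeff_map]

lemma quatLHS_map {B : Type*} [Ring B] [Algebra ℂ B] (φ : A →+* B) {N : ℕ}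
    (s : Fin N → Fin N → PowerSeries A) (i j k l : Fin N) :
    quatLHS (fun a b => PowerSeries.map φ (s a b)) i j k l
      = MvPowerSeries.map φ (quatLHS s i j k l) := by
  simp only [quatLHS, Ring.lie_def, Xv, Yv, map_mul, map_sub, map_pow,
    MvPowerSeries.map_X, map_inVarMv]

lemma quatRHS_map {B : Type*} [Ring B] [Algebra ℂ B] (φ : A →+* B) {N : ℕ}
    (s : Fin N → Fin N → PowerSeries A) (i j k l : Fin N) :
    quatRHS (fun a b => PowerSeries.map φ (s a b)) i j k l
      = MvPowerSeries.map φ (quatRHS s i j k l) := by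
  simp only [quatRHS, Xv, Yv, map_mul, map_sub, map_add, map_pow,
    MvPowerSeries.map_X, map_inVarMv]

lemma sX_quat (n : ℕ) : QuatRel (sX n) := by
  intro i j k l
  have hL : quatLHS (sX n) i j k l
      = MvPowerSeries.map (RingQuot.mkRingHom (XRel n)) (quatLHS (sFree n) i j k l) :=
    quatLHS_map (RingQuot.mkRingHom (XRel n)) (sFree n) i j k l
  have hR : quatRHS (sX n) i j k l
      = MvPowerSeries.map (RingQuot.mkRingHom (XRel n)) (quatRHS (sFree n) i j k l) :=
    quatRHS_map (RingQuot.mkRingHom (XRel n)) (sFree n) i j k l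
  apply MvPowerSeries.ext; intro m
  rw [hL, hR, MvPowerSeries.coeff_map, MvPowerSeries.coeff_map]
  exact RingQuot.mkRingHom_rel (XRel.quat i j k l m)

lemma ps_map_map {B C : Type*} [Ring B] [Algebra ℂ B] [Ring C] [Algebra ℂ C] (f : A →+* B) (g : B →+* C)
    (φ : PowerSeries A) :
    PowerSeries.map g (PowerSeries.map f φ) = PowerSeries.map (g.comp f) φ := by
  apply PowerSeries.ext; intro n
  rw [PowerSeries.coeff_map, PowerSeries.coeff_map, PowerSeries.coeff_map]
  rfl

lemma coeff_sX (n : ℕ) (i j : Fin n) (r : ℕ) :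
    PowerSeries.coeff (r + 1) (sX n i j)
      = RingQuot.mkAlgHom ℂ (XRel n) (FreeAlgebra.ι ℂ (i, j, r)) := by
  rw [sX, PowerSeries.coeff_map]
  rw [show (PowerSeries.coeff (r + 1)) (sFree n i j) = FreeAlgebra.ι ℂ (i, j, r) from
    PowerSeries.coeff_mk _ _]
  rw [← RingQuot.mkAlgHom_coe ℂ (XRel n)]
  rfl

lemma gen_top {n : ℕ} (S : Subalgebra ℂ (Xt n))
    (h : ∀ (i j : Fin n) (r : ℕ), PowerSeries.coeff (r + 1) (sX n i j) ∈ S) (x : Xt n) :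
    x ∈ S := by
  obtain ⟨z, rfl⟩ := RingQuot.mkAlgHom_surjective ℂ (XRel n) x
  have hle : Algebra.adjoin ℂ (Set.range (FreeAlgebra.ι ℂ (X := Fin n × Fin n × ℕ)))
      ≤ S.comap (RingQuot.mkAlgHom ℂ (XRel n)) := by
    rw [Algebra.adjoin_le_iff]
    rintro _ ⟨⟨i, j, r⟩, rfl⟩
    show RingQuot.mkAlgHom ℂ (XRel n) _ ∈ S
    rw [← coeff_sX]
    exact h i j r
  have hz : z ∈ Algebra.adjoin ℂ (Set.range (FreeAlgebra.ι ℂ (X := Fin n × Fin n × ℕ))) := by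
    rw [FreeAlgebra.adjoin_range_ι]
    trivial
  exact hle hz
set_option maxHeartbeats 1000000 in
theorem statement_3 (M N : ℕ)
    (jm : Xt M →ₐ[ℂ] Xt (M + N))
    (hjm : ∀ i j : Fin M,
      PowerSeries.map (jm : Xt M →+* Xt (M + N)) (sX M i j)
        = sX (M + N) (Fin.castAdd N i) (Fin.castAdd N j))
    (StN : Matrix (Fin N) (Fin N) (PowerSeries (Xt N)))
    (hStN1 : Matrix.of (sX N) * StN = 1) (hStN2 : StN * Matrix.of (sX N) = 1)
    (StMN : Matrix (Fin (M + N)) (Fin (M + N)) (PowerSeries (Xt (M + N))))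
    (hStMN1 : Matrix.of (sX (M + N)) * StMN = 1)
    (hStMN2 : StMN * Matrix.of (sX (M + N)) = 1)
    (vpN : Xt N →ₐ[ℂ] Xt N)
    (hvpN : ∀ i j : Fin N,
      PowerSeries.map (vpN : Xt N →+* Xt N) (sX N i j)
        = shiftVar ((N : ℂ) / 2) (negVar (StN i j)))
    (iM : Xt N →ₐ[ℂ] Xt (M + N))
    (hiM : ∀ i j : Fin N,
      PowerSeries.map (iM : Xt N →+* Xt (M + N)) (sX N i j)
        = sX (M + N) (Fin.natAdd M i) (Fin.natAdd M j))
    (vpMN : Xt (M + N) →ₐ[ℂ] Xt (M + N))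
    (hvpMN : ∀ i j : Fin (M + N),
      PowerSeries.map (vpMN : Xt (M + N) →+* Xt (M + N)) (sX (M + N) i j)
        = shiftVar (((M + N : ℕ) : ℂ) / 2) (negVar (StMN i j))) :
    ∀ (x : Xt M) (y : Xt N),
      Commute (jm x) ((vpMN.comp (iM.comp vpN)) y) := by
  intro x y
  set Θ : Xt N →ₐ[ℂ] Xt (M + N) := vpMN.comp (iM.comp vpN) with hΘ
  -- entrywise contraction identities in `X_{M+N}`
  have hst : ∀ a b : Fin (M + N), (∑ c, sX (M + N) a c * StMN c b)
      = if a = b then 1 else 0 := by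
    intro a b
    have h := congrFun (congrFun hStMN1 a) b
    simpa [Matrix.mul_apply, Matrix.one_apply] using h
  have hts : ∀ a b : Fin (M + N), (∑ c, StMN a c * sX (M + N) c b)
      = if a = b then 1 else 0 := by
    intro a b
    have h := congrFun (congrFun hStMN2 a) b
    simpa [Matrix.mul_apply, Matrix.one_apply] using h
  have hne : ∀ (a : Fin M) (b : Fin N), Fin.castAdd N a ≠ Fin.natAdd M b := by
    intro a b h
    have hv := congrArg Fin.val h
    simp [Fin.castAdd, Fin.natAdd] at hv
    omega
  -- the core commutation with entries of the inverse matrix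
  have SCcore : ∀ (i0 j0 : Fin M) (k0 l0 : Fin N),
      SC (sX (M + N) (Fin.castAdd N i0) (Fin.castAdd N j0))
        (StMN (Fin.natAdd M k0) (Fin.natAdd M l0)) := by
    intro i0 j0 k0 l0
    exact key_commute (sX (M + N)) (fun a b => StMN a b) (sX_quat (M + N)) hst hts
      (hne i0 l0) (Ne.symm (hne j0 k0)) (hne j0 l0) (Ne.symm (hne i0 k0))
  -- the mapped matrices
  have hμ1 : (PowerSeries.map (vpMN : Xt (M + N) →+* Xt (M + N))).mapMatrix
        ((PowerSeries.map (iM : Xt N →+* Xt (M + N))).mapMatrix (Matrix.of (sX N)))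
      * (PowerSeries.map (vpMN : Xt (M + N) →+* Xt (M + N))).mapMatrix
        ((PowerSeries.map (iM : Xt N →+* Xt (M + N))).mapMatrix StN) = 1 := by
    rw [← map_mul, ← map_mul, hStN1, map_one, map_one]
  have hμ2 : (PowerSeries.map (vpMN : Xt (M + N) →+* Xt (M + N))).mapMatrix
        ((PowerSeries.map (iM : Xt N →+* Xt (M + N))).mapMatrix StN)
      * (PowerSeries.map (vpMN : Xt (M + N) →+* Xt (M + N))).mapMatrix
        ((PowerSeries.map (iM : Xt N →+* Xt (M + N))).mapMatrix (Matrix.of (sX N))) = 1 := by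
    rw [← map_mul, ← map_mul, hStN2, map_one, map_one]
  have hWentry : ∀ a b : Fin N,
      ((PowerSeries.map (vpMN : Xt (M + N) →+* Xt (M + N))).mapMatrix
        ((PowerSeries.map (iM : Xt N →+* Xt (M + N))).mapMatrix (Matrix.of (sX N)))) a b
        = shiftVar (((M + N : ℕ) : ℂ) / 2)
            (negVar (StMN (Fin.natAdd M a) (Fin.natAdd M b))) := by
    intro a b
    simp only [RingHom.mapMatrix_apply, Matrix.map_apply, Matrix.of_apply]
    rw [hiM a b, hvpMN]
  have hSCT : ∀ (i0 j0 : Fin M) (a b : Fin N),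
      SC (sX (M + N) (Fin.castAdd N i0) (Fin.castAdd N j0))
        (PowerSeries.map (vpMN : Xt (M + N) →+* Xt (M + N))
          (PowerSeries.map (iM : Xt N →+* Xt (M + N)) (StN a b))) := by
    intro i0 j0
    have h := SC_of_matrix_inv (sX (M + N) (Fin.castAdd N i0) (Fin.castAdd N j0)) _ _ hμ1 hμ2
      (fun a b => by
        rw [hWentry a b]
        exact ((SCcore i0 j0 a b).negVar).shiftVar _)
    intro a b
    have h2 := h a b
    simpa only [RingHom.mapMatrix_apply, Matrix.map_apply] using h2
  -- the image of the generating series under Θ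
  have hΘser : ∀ k0 l0 : Fin N,
      PowerSeries.map (Θ : Xt N →+* Xt (M + N)) (sX N k0 l0)
        = shiftVar ((N : ℂ) / 2)
            (negVar (PowerSeries.map (vpMN : Xt (M + N) →+* Xt (M + N))
              (PowerSeries.map (iM : Xt N →+* Xt (M + N)) (StN k0 l0)))) := by
    intro k0 l0
    have h1 : PowerSeries.map (Θ : Xt N →+* Xt (M + N)) (sX N k0 l0)
        = PowerSeries.map (vpMN : Xt (M + N) →+* Xt (M + N))
            (PowerSeries.map (iM : Xt N →+* Xt (M + N))
              (PowerSeries.map (vpN : Xt N →+* Xt N) (sX N k0 l0))) := by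
      rw [ps_map_map, ps_map_map]
      congr 1
    rw [h1, hvpN k0 l0, map_shiftVar iM, map_negVar iM, map_shiftVar vpMN, map_negVar vpMN]
  have hSCfinal : ∀ (i0 j0 : Fin M) (k0 l0 : Fin N),
      SC (sX (M + N) (Fin.castAdd N i0) (Fin.castAdd N j0))
        (PowerSeries.map (Θ : Xt N →+* Xt (M + N)) (sX N k0 l0)) := by
    intro i0 j0 k0 l0
    rw [hΘser k0 l0]
    exact ((hSCT i0 j0 k0 l0).negVar).shiftVar _
  -- commutation of the generators
  have hgen : ∀ (i0 j0 : Fin M) (r : ℕ) (k0 l0 : Fin N) (r' : ℕ),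
      Commute (jm (PowerSeries.coeff r (sX M i0 j0)))
        (Θ (PowerSeries.coeff r' (sX N k0 l0))) := by
    intro i0 j0 r k0 l0 r'
    have e1 : jm (PowerSeries.coeff r (sX M i0 j0))
        = PowerSeries.coeff r
            (sX (M + N) (Fin.castAdd N i0) (Fin.castAdd N j0)) := by
      rw [← hjm i0 j0, PowerSeries.coeff_map]
      rfl
    have e2 : Θ (PowerSeries.coeff r' (sX N k0 l0))
        = PowerSeries.coeff r'
            (PowerSeries.map (Θ : Xt N →+* Xt (M + N)) (sX N k0 l0)) := by
      rw [PowerSeries.coeff_map]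
      rfl
    rw [e1, e2]
    exact hSCfinal i0 j0 k0 l0 r r'
  -- extend to the whole algebras
  have hy : ∀ (i0 j0 : Fin M) (r : ℕ) (y' : Xt N),
      Commute (jm (PowerSeries.coeff r (sX M i0 j0))) (Θ y') := by
    intro i0 j0 r y'
    have hmem : y' ∈ Subalgebra.comap Θ
        (Subalgebra.centralizer ℂ {jm (PowerSeries.coeff r (sX M i0 j0))}) := by
      apply gen_top
      intro k0 l0 r'
      rw [Subalgebra.mem_comap, Subalgebra.mem_centralizer_iff]
      rintro g hg
      rw [Set.mem_singleton_iff] at hg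
      subst hg
      exact (hgen i0 j0 r k0 l0 (r' + 1)).eq
    have h3 := (Subalgebra.mem_comap _ _ _).mp hmem
    rw [Subalgebra.mem_centralizer_iff] at h3
    exact h3 _ (Set.mem_singleton _)
  have hx : x ∈ Subalgebra.comap jm (Subalgebra.centralizer ℂ (Set.range ⇑Θ)) := by
    apply gen_top
    intro i0 j0 r
    rw [Subalgebra.mem_comap, Subalgebra.mem_centralizer_iff]
    rintro g ⟨y', rfl⟩
    exact ((hy i0 j0 (r + 1) y').symm).eq
  have h4 := (Subalgebra.mem_comap _ _ _).mp hx
  rw [Subalgebra.mem_centralizer_iff] at h4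
  exact (h4 _ ⟨y, rfl⟩).symm

end TY
end
end
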